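/- For every stream s: rep s holds if and only if s is globally finally red, i.e., for every n there exists m ≥ n with s m = true. -/
import Mathlib


/-- The suffix of a stream at position `n`. -/
def suff (s : ℕ → Bool) (n : ℕ) : ℕ → Bool := fun k => s (n + k)

/-- The weak-until predicate transformer (greatest fixed point, impredicative). -/
def W (X : (ℕ → Bool) → Prop) (s : ℕ → Bool) : Prop :=
  ∃ Y : (ℕ → Bool) → Prop, Y s ∧
    ∀ t, Y t → (t 0 = true → X (suff t 1)) ∧ (t 0 = false → Y (suff t 1))

/-- A stream is almost always blue: least fixed point of `W`. -/
def pre (s : ℕ → Bool) : Prop :=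
  ∀ P : (ℕ → Bool) → Prop, (∀ t, W P t → P t) → P s

/-- The strong-until predicate transformer (inductive). -/
inductive U (X : (ℕ → Bool) → Prop) : (ℕ → Bool) → Prop
  | red : ∀ t, t 0 = true → X (suff t 1) → U X t
  | blue : ∀ t, t 0 = false → U X (suff t 1) → U X t

/-- A stream is infinitely often red: greatest fixed point of `U`. -/
def rep (s : ℕ → Bool) : Prop :=
  ∃ P : (ℕ → Bool) → Prop, P s ∧ ∀ t, P t → U P t

/-- `succs s n m` : `m` is the position following the first red position at or after `n`. -/
def succs (s : ℕ → Bool) (n m : ℕ) : Prop :=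
  ∃ l, n ≤ l ∧ (∀ k, n ≤ k → k < l → s k = false) ∧ s l = true ∧ m = l + 1

/-- The set of red positions of a stream. -/
def Reds (s : ℕ → Bool) : Set ℕ := {n | s n = true}

/-- The set of blue positions of a stream. -/
def Blues (s : ℕ → Bool) : Set ℕ := {n | s n = false}

/-- A colist is duplicate-free over `A`: entries lie in `A` and entries at
distinct positions are distinct. -/
def DupFree (l : Stream'.Seq ℕ) (A : Set ℕ) : Prop :=
  (∀ n x, l.get? n = some x → x ∈ A) ∧
  (∀ m n x y, m ≠ n → l.get? m = some x → l.get? n = some y → x ≠ y)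

/-- A set of naturals is streamless if every duplicate-free colist over it is finite. -/
def Streamless (A : Set ℕ) : Prop :=
  ∀ l : Stream'.Seq ℕ, DupFree l A → l.Terminates

/-- A set of naturals is almost full if every strictly increasing sequence hits it. -/
def AlmostFull (A : Set ℕ) : Prop :=
  ∀ i : ℕ → ℕ, StrictMono i → ∃ n, i n ∈ A

/-- A colist is a descending chain of the relation `r` starting at `x`. -/
def IsDescChain (r : ℕ → ℕ → Prop) (x : ℕ) (l : Stream'.Seq ℕ) : Prop :=
  (∀ y, l.get? 0 = some y → r x y) ∧
  (∀ n a b, l.get? n = some a → l.get? (n + 1) = some b → r a b)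

/-- `r` is strongly normalizing at `x`: every descending chain starting at `x` is finite. -/
def SN (r : ℕ → ℕ → Prop) (x : ℕ) : Prop :=
  ∀ l : Stream'.Seq ℕ, IsDescChain r x l → l.Terminates

/-- `n` is antifounded wrt `r`: greatest fixed point of the one-step descent operator. -/
def af (r : ℕ → ℕ → Prop) (n : ℕ) : Prop :=
  ∃ Q : ℕ → Prop, Q n ∧ ∀ k, Q k → ∃ m, r k m ∧ Q m

/-- `atmost n s`: fewer than `n` red positions up to every position `m`. -/
def atmost (n : ℕ) (s : ℕ → Bool) : Prop :=
  ∀ m, ((Finset.range (m + 1)).filter (fun k => s k = true)).card < n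

/-- Iterates of the weak-until operator starting from the empty predicate. -/
def Fiter : ℕ → (ℕ → Bool) → Prop
  | 0 => fun _ => False
  | n + 1 => W (Fiter n)

/-- The ω-iterate of the weak-until operator. -/
def Fomega (s : ℕ → Bool) : Prop := ∃ n, Fiter n s

/-- The Lesser Principle of Omniscience. -/
def LPO : Prop := ∀ s : ℕ → Bool, (∃ n, s n = true) ∨ (∀ n, s n = false)

/-- Markov's Principle. -/
def MP : Prop := ∀ s : ℕ → Bool, ¬(∀ n, s n = false) → ∃ n, s n = true

/-- Noetherian sets of naturals. -/
inductive Noeth : Set ℕ → Prop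
  | intro : ∀ A : Set ℕ, (∀ x ∈ A, Noeth (A \ {x})) → Noeth A

lemma suff_suff (s : ℕ → Bool) (a b : ℕ) : suff (suff s a) b = suff s (a + b) := by
  funext k; simp [suff, Nat.add_assoc]

lemma U_extract {P : (ℕ → Bool) → Prop} {t : ℕ → Bool} (h : U P t) :
    ∃ k, t k = true ∧ P (suff t (k + 1)) := by
  induction h with
  | red t h hx => exact ⟨0, h, hx⟩
  | blue t h _ ih =>
    obtain ⟨k, hk, hp⟩ := ih
    refine ⟨k + 1, by simpa [suff, Nat.add_comm] using hk, ?_⟩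
    rw [show suff t (k + 1 + 1) = suff (suff t 1) (k + 1) by rw [suff_suff]; ring_nf]
    exact hp

lemma io_suff {t : ℕ → Bool} (h : ∀ n, ∃ m, n ≤ m ∧ t m = true) :
    ∀ n, ∃ m, n ≤ m ∧ (suff t 1) m = true := by
  intro n
  obtain ⟨m, hm, ht⟩ := h (n + 1)
  refine ⟨m - 1, by omega, ?_⟩
  simpa [suff, show 1 + (m - 1) = m by omega] using ht

lemma back_aux : ∀ m (t : ℕ → Bool), t m = true →
    (∀ n, ∃ k, n ≤ k ∧ t k = true) →
    U (fun u => ∀ n, ∃ k, n ≤ k ∧ u k = true) t := by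
  intro m
  induction m with
  | zero => intro t h hp; exact U.red t h (io_suff hp)
  | succ m ih =>
    intro t h hp
    cases hb : t 0 with
    | true => exact U.red t hb (io_suff hp)
    | false =>
      refine U.blue t hb (ih (suff t 1) ?_ (io_suff hp))
      simpa [suff, Nat.add_comm] using h

theorem stmt_6 : ∀ s : ℕ → Bool, rep s ↔ ∀ n, ∃ m, n ≤ m ∧ s m = true := by
  intro s
  constructor
  · rintro ⟨P, hs, hstep⟩ n
    have aux : ∀ j, P (suff s j) → ∃ m, j ≤ m ∧ s m = true ∧ P (suff s (m + 1)) := by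
      intro j hj
      obtain ⟨k, hk, hp⟩ := U_extract (hstep _ hj)
      refine ⟨j + k, by omega, by simpa [suff] using hk, ?_⟩
      rw [show j + k + 1 = j + (k + 1) by ring, ← suff_suff]
      exact hp
    have key : ∀ n, ∃ j, n ≤ j ∧ P (suff s j) := by
      intro n
      induction n with
      | zero =>
        refine ⟨0, le_refl _, ?_⟩
        have h0 : suff s 0 = s := by funext k; simp [suff]
        rw [h0]; exact hs
      | succ n ih =>
        obtain ⟨j, hj, hpj⟩ := ih
        obtain ⟨m, hm, _, hp⟩ := aux j hpj
        exact ⟨m + 1, by omega, hp⟩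
    obtain ⟨j, hj, hpj⟩ := key n
    obtain ⟨m, hm, hred, _⟩ := aux j hpj
    exact ⟨m, le_trans hj hm, hred⟩
  · intro h
    refine ⟨fun u => ∀ n, ∃ k, n ≤ k ∧ u k = true, h, fun t hp => ?_⟩
    obtain ⟨m, _, hm⟩ := hp 0
    exact back_aux m t hm hp
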